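/- Suppose d ≥ V. For λ > 0 let L_λ be a minimizer of CE(L) + λ‖L‖_* over {L ∈ ℝ^{V×m} : rank(L) ≤ d}. Then lim_{λ→0} CE(L_λ) = H (the empirical entropy), and lim_{λ→0} P_F(L_λ) = L^in, where L^in is the unique element of F satisfying L^in[z,j] − L^in[z′,j] = log(p̂_{j,z}/p̂_{j,z′}) for all j ∈ {1,…,m} and all z, z′ ∈ S_j. -/

import Mathlib

open Filter Topology Matrix

noncomputable section

/-- Nuclear norm: sum of the singular values of `A`. -/
def nuclearNorm {a b : ℕ} (A : Matrix (Fin a) (Fin b) ℝ) : ℝ :=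
  ∑ i, Real.sqrt ((show (Aᵀ * A).IsHermitian by
    simpa [Matrix.conjTranspose_eq_transpose_of_trivial] using
      Matrix.isHermitian_conjTranspose_mul_self A).eigenvalues i)

/-- The NTP cross-entropy loss. -/
def CEloss {V m : ℕ} (piv : Fin m → ℝ) (p : Fin m → Fin V → ℝ)
    (L : Matrix (Fin V) (Fin m) ℝ) : ℝ :=
  - ∑ j, piv j * ∑ z ∈ Finset.univ.filter (fun z => 0 < p j z),
      p j z * Real.log (Real.exp (L z j) / ∑ v, Real.exp (L v j))

/-- The empirical entropy. -/
def entropyH {V m : ℕ} (piv : Fin m → ℝ) (p : Fin m → Fin V → ℝ) : ℝ :=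
  - ∑ j, piv j * ∑ z ∈ Finset.univ.filter (fun z => 0 < p j z),
      p j z * Real.log (p j z)

/-- The subspace `F`: span of the matrices `(e_z − e_{z'}) ẽ_jᵀ` over `j` and `z, z' ∈ S_j`. -/
def Fsub {V m : ℕ} (p : Fin m → Fin V → ℝ) : Submodule ℝ (Matrix (Fin V) (Fin m) ℝ) :=
  Submodule.span ℝ {M | ∃ j z z', 0 < p j z ∧ 0 < p j z' ∧
    M = Matrix.single z j 1 - Matrix.single z' j 1}

/-- Frobenius inner product of matrices. -/
def frobInner {a b : ℕ} (X Y : Matrix (Fin a) (Fin b) ℝ) : ℝ := ∑ i, ∑ j, X i j * Y i j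

/-! ### Auxiliary lemmas -/

lemma hfun_pos {t : ℝ} (ht : 0 < t) (hne : t ≠ 1) : 0 < t - 1 - Real.log t := by
  have := Real.log_lt_sub_one_of_pos ht hne; linarith

lemma hfun_deriv {x : ℝ} (hx0 : x ≠ 0) :
    HasDerivAt (fun t : ℝ => t - 1 - Real.log t) (1 - x⁻¹) x := by
  exact ((hasDerivAt_id' x).sub_const 1).sub (Real.hasDerivAt_log hx0)

lemma hfun_anti : AntitoneOn (fun t : ℝ => t - 1 - Real.log t) (Set.Ioc 0 1) := by
  apply antitoneOn_of_deriv_nonpos (convex_Ioc 0 1)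
  · apply ContinuousOn.sub (by fun_prop)
    exact Real.continuousOn_log.mono (fun x hx => by simp; exact ne_of_gt hx.1)
  · intro x hx
    rw [interior_Ioc] at hx
    exact (hfun_deriv (ne_of_gt hx.1)).differentiableAt.differentiableWithinAt
  · intro x hx
    rw [interior_Ioc] at hx
    rw [(hfun_deriv (ne_of_gt hx.1)).deriv]
    have : 1 ≤ x⁻¹ := (one_le_inv₀ hx.1).mpr hx.2.le
    linarith

lemma hfun_mono : MonotoneOn (fun t : ℝ => t - 1 - Real.log t) (Set.Ici 1) := by
  apply monotoneOn_of_deriv_nonneg (convex_Ici 1)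
  · apply ContinuousOn.sub (by fun_prop)
    refine Real.continuousOn_log.mono (fun x hx => ?_)
    simp only [Set.mem_Ici] at hx; simp; linarith
  · intro x hx
    rw [interior_Ici] at hx
    have hx0 : x ≠ 0 := by intro h; rw [h] at hx; norm_num at hx
    exact (hfun_deriv hx0).differentiableAt.differentiableWithinAt
  · intro x hx
    rw [interior_Ici] at hx
    have hx1 : (1:ℝ) < x := hx
    have hx0 : x ≠ 0 := by linarith
    rw [(hfun_deriv hx0).deriv]
    have : x⁻¹ ≤ 1 := by rw [inv_le_one_iff₀]; right; linarith
    linarith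

lemma hfun_small {ε : ℝ} (hε : 0 < ε) :
    ∃ δ > 0, ∀ t : ℝ, 0 < t → t - 1 - Real.log t < δ → |t - 1| < ε := by
  set ε' := min ε (1/2) with hε'def
  have hε'0 : 0 < ε' := lt_min hε (by norm_num)
  have hε'half : ε' ≤ 1/2 := min_le_right _ _
  have hε'ε : ε' ≤ ε := min_le_left _ _
  have h1 : (0:ℝ) < 1 - ε' := by linarith
  have hlo : 0 < (1 - ε') - 1 - Real.log (1 - ε') := hfun_pos h1 (by intro h; linarith)
  have hhi : 0 < (1 + ε') - 1 - Real.log (1 + ε') := hfun_pos (by linarith) (by intro h; linarith)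
  refine ⟨min ((1 - ε') - 1 - Real.log (1 - ε')) ((1 + ε') - 1 - Real.log (1 + ε')),
    lt_min hlo hhi, ?_⟩
  intro t ht hδ
  have hδ1 : t - 1 - Real.log t < (1 - ε') - 1 - Real.log (1 - ε') :=
    lt_of_lt_of_le hδ (min_le_left _ _)
  have hδ2 : t - 1 - Real.log t < (1 + ε') - 1 - Real.log (1 + ε') :=
    lt_of_lt_of_le hδ (min_le_right _ _)
  rw [abs_lt]
  constructor
  · by_contra h
    push_neg at h
    have ht1 : t ≤ 1 - ε' := by linarith
    have := hfun_anti (Set.mem_Ioc.mpr ⟨ht, by linarith⟩) (Set.mem_Ioc.mpr ⟨h1, by linarith⟩) ht1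
    simp only at this
    linarith
  · by_contra h
    push_neg at h
    have ht1 : 1 + ε' ≤ t := by linarith
    have := hfun_mono (Set.mem_Ici.mpr (by linarith : (1:ℝ) ≤ 1 + ε'))
      (Set.mem_Ici.mpr (by linarith : (1:ℝ) ≤ t)) ht1
    simp only at this
    linarith

/-- Softmax probabilities of a logit matrix. -/
def qfun {V m : ℕ} (L : Matrix (Fin V) (Fin m) ℝ) (j : Fin m) (z : Fin V) : ℝ :=
  Real.exp (L z j) / ∑ v, Real.exp (L v j)

section analytic
variable {V m : ℕ} {piv : Fin m → ℝ} {p : Fin m → Fin V → ℝ}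

lemma denom_pos (hV : 0 < V) (L : Matrix (Fin V) (Fin m) ℝ) (j : Fin m) :
    0 < ∑ v, Real.exp (L v j) := by
  have : Nonempty (Fin V) := ⟨⟨0, hV⟩⟩
  exact Finset.sum_pos (fun v _ => Real.exp_pos _) Finset.univ_nonempty

lemma qfun_pos (hV : 0 < V) (L : Matrix (Fin V) (Fin m) ℝ) (j : Fin m) (z : Fin V) :
    0 < qfun L j z := div_pos (Real.exp_pos _) (denom_pos hV L j)

lemma qfun_sum (hV : 0 < V) (L : Matrix (Fin V) (Fin m) ℝ) (j : Fin m) :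
    ∑ z, qfun L j z = 1 := by
  simp only [qfun]
  rw [← Finset.sum_div, div_self (denom_pos hV L j).ne']

lemma log_qfun (hV : 0 < V) (L : Matrix (Fin V) (Fin m) ℝ) (j : Fin m) (z : Fin V) :
    Real.log (qfun L j z) = L z j - Real.log (∑ v, Real.exp (L v j)) := by
  rw [qfun, Real.log_div (Real.exp_pos _).ne' (denom_pos hV L j).ne', Real.log_exp]

lemma sum_p_S (hp : ∀ j z, 0 ≤ p j z) (hpsum : ∀ j, ∑ z, p j z = 1) (j : Fin m) :
    ∑ z ∈ Finset.univ.filter (fun z => 0 < p j z), p j z = 1 := by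
  rw [← hpsum j]
  apply Finset.sum_filter_of_ne
  intro z _ hz
  exact lt_of_le_of_ne (hp j z) (Ne.symm hz)

lemma CE_sub_H (hV : 0 < V) (L : Matrix (Fin V) (Fin m) ℝ) :
    CEloss piv p L - entropyH piv p =
      ∑ j, piv j * ∑ z ∈ Finset.univ.filter (fun z => 0 < p j z),
        p j z * Real.log (p j z / qfun L j z) := by
  have inner : ∀ j, (∑ z ∈ Finset.univ.filter (fun z => 0 < p j z),
      p j z * Real.log (p j z / qfun L j z))
      = (∑ z ∈ Finset.univ.filter (fun z => 0 < p j z), p j z * Real.log (p j z))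
        - ∑ z ∈ Finset.univ.filter (fun z => 0 < p j z), p j z * Real.log (qfun L j z) := by
    intro j
    rw [← Finset.sum_sub_distrib]
    refine Finset.sum_congr rfl fun z hz => ?_
    rw [Real.log_div (ne_of_gt (Finset.mem_filter.mp hz).2) (qfun_pos hV L j z).ne']
    ring
  simp only [inner, mul_sub]
  rw [Finset.sum_sub_distrib]
  simp only [CEloss, entropyH, qfun]
  ring

lemma phi_nonneg {a q : ℝ} (ha : 0 < a) (hq : 0 < q) :
    0 ≤ a * Real.log (a / q) + q - a := by
  have h0 := Real.log_le_sub_one_of_pos (div_pos hq ha)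
  have h2 : a * Real.log (q / a) ≤ a * (q / a - 1) := mul_le_mul_of_nonneg_left h0 ha.le
  have h3 : a * (q / a - 1) = q - a := by field_simp
  have h4 : a * Real.log (a / q) = -(a * Real.log (q / a)) := by
    rw [Real.log_div ha.ne' hq.ne', Real.log_div hq.ne' ha.ne']; ring
  linarith

lemma phi_eq_hfun {a q : ℝ} (ha : 0 < a) (hq : 0 < q) :
    a * Real.log (a / q) + q - a = a * ((q / a) - 1 - Real.log (q / a)) := by
  rw [Real.log_div ha.ne' hq.ne', Real.log_div hq.ne' ha.ne']
  field_simp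
  ring

lemma nuclearNorm_nonneg {a b : ℕ} (A : Matrix (Fin a) (Fin b) ℝ) : 0 ≤ nuclearNorm A :=
  Finset.sum_nonneg fun _ _ => Real.sqrt_nonneg _

lemma sum_phi_le_KL (hV : 0 < V) (hp : ∀ j z, 0 ≤ p j z) (hpsum : ∀ j, ∑ z, p j z = 1)
    (L : Matrix (Fin V) (Fin m) ℝ) (j : Fin m) :
    ∑ z ∈ Finset.univ.filter (fun z => 0 < p j z),
        (p j z * Real.log (p j z / qfun L j z) + qfun L j z - p j z) ≤
      ∑ z ∈ Finset.univ.filter (fun z => 0 < p j z),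
        p j z * Real.log (p j z / qfun L j z) := by
  have h1 : ∑ z ∈ Finset.univ.filter (fun z => 0 < p j z), qfun L j z ≤ 1 := by
    rw [← qfun_sum hV L j]
    exact Finset.sum_le_sum_of_subset_of_nonneg (Finset.filter_subset _ _)
      (fun z _ _ => (qfun_pos hV L j z).le)
  have h2 := sum_p_S hp hpsum j
  have h3 : ∑ z ∈ Finset.univ.filter (fun z => 0 < p j z),
      (p j z * Real.log (p j z / qfun L j z) + qfun L j z - p j z)
      = (∑ z ∈ Finset.univ.filter (fun z => 0 < p j z), p j z * Real.log (p j z / qfun L j z))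
        + (∑ z ∈ Finset.univ.filter (fun z => 0 < p j z), qfun L j z)
        - ∑ z ∈ Finset.univ.filter (fun z => 0 < p j z), p j z := by
    rw [Finset.sum_sub_distrib, Finset.sum_add_distrib]
  rw [h3, h2]
  linarith

lemma KL_nonneg (hV : 0 < V) (hp : ∀ j z, 0 ≤ p j z) (hpsum : ∀ j, ∑ z, p j z = 1)
    (L : Matrix (Fin V) (Fin m) ℝ) (j : Fin m) :
    0 ≤ ∑ z ∈ Finset.univ.filter (fun z => 0 < p j z),
        p j z * Real.log (p j z / qfun L j z) := by
  refine le_trans ?_ (sum_phi_le_KL hV hp hpsum L j)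
  exact Finset.sum_nonneg fun z hz =>
    phi_nonneg (Finset.mem_filter.mp hz).2 (qfun_pos hV L j z)

lemma H_le_CE (hV : 0 < V) (hp : ∀ j z, 0 ≤ p j z) (hpsum : ∀ j, ∑ z, p j z = 1)
    (hpiv : ∀ j, 0 < piv j) (L : Matrix (Fin V) (Fin m) ℝ) :
    entropyH piv p ≤ CEloss piv p L := by
  have := CE_sub_H (piv := piv) (p := p) hV L
  nlinarith [Finset.sum_nonneg (fun j (_ : j ∈ Finset.univ) =>
    mul_nonneg (hpiv j).le (KL_nonneg hV hp hpsum L j)), this]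

lemma phi_le_D (hV : 0 < V) (hp : ∀ j z, 0 ≤ p j z) (hpsum : ∀ j, ∑ z, p j z = 1)
    (hpiv : ∀ j, 0 < piv j) (L : Matrix (Fin V) (Fin m) ℝ) (j : Fin m) (z : Fin V)
    (hz : 0 < p j z) :
    piv j * (p j z * Real.log (p j z / qfun L j z) + qfun L j z - p j z) ≤
      CEloss piv p L - entropyH piv p := by
  rw [CE_sub_H hV L]
  have h1 : p j z * Real.log (p j z / qfun L j z) + qfun L j z - p j z ≤
      ∑ z' ∈ Finset.univ.filter (fun z => 0 < p j z),
        p j z' * Real.log (p j z' / qfun L j z') := by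
    refine le_trans ?_ (sum_phi_le_KL hV hp hpsum L j)
    exact Finset.single_le_sum (fun z' hz' =>
        phi_nonneg (Finset.mem_filter.mp hz').2 (qfun_pos hV L j z'))
      (Finset.mem_filter.mpr ⟨Finset.mem_univ z, hz⟩)
  calc piv j * (p j z * Real.log (p j z / qfun L j z) + qfun L j z - p j z)
      ≤ piv j * ∑ z' ∈ Finset.univ.filter (fun z => 0 < p j z),
          p j z' * Real.log (p j z' / qfun L j z') := mul_le_mul_of_nonneg_left h1 (hpiv j).le
    _ ≤ ∑ j', piv j' * ∑ z' ∈ Finset.univ.filter (fun z => 0 < p j' z),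
          p j' z' * Real.log (p j' z' / qfun L j' z') :=
        Finset.single_le_sum (fun j' _ =>
          mul_nonneg (hpiv j').le (KL_nonneg hV hp hpsum L j')) (Finset.mem_univ j)

lemma CE_witness (hV : 0 < V) (hp : ∀ j z, 0 ≤ p j z) (hpsum : ∀ j, ∑ z, p j z = 1)
    (hpiv : ∀ j, 0 < piv j) (hpisum : ∑ j, piv j = 1) (c : ℝ) :
    CEloss piv p (Matrix.of fun z j => if 0 < p j z then Real.log (p j z) else -c)
      - entropyH piv p ≤ V * Real.exp (-c) := by
  set W : Matrix (Fin V) (Fin m) ℝ :=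
    Matrix.of fun z j => if 0 < p j z then Real.log (p j z) else -c with hW
  rw [CE_sub_H hV W]
  have hDle : ∀ j, ∑ v, Real.exp (W v j) ≤ 1 + V * Real.exp (-c) := by
    intro j
    have : ∀ v : Fin V, Real.exp (W v j) ≤ p j v + Real.exp (-c) := by
      intro v
      by_cases h : 0 < p j v
      · simp only [hW, Matrix.of_apply, if_pos h, Real.exp_log h]
        linarith [Real.exp_pos (-c)]
      · simp only [hW, Matrix.of_apply, if_neg h]
        linarith [hp j v]
    calc ∑ v, Real.exp (W v j) ≤ ∑ v : Fin V, (p j v + Real.exp (-c)) :=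
          Finset.sum_le_sum fun v _ => this v
      _ = 1 + V * Real.exp (-c) := by
          rw [Finset.sum_add_distrib, hpsum j, Finset.sum_const, Finset.card_univ,
            Fintype.card_fin, nsmul_eq_mul]
  have hKL : ∀ j, ∑ z ∈ Finset.univ.filter (fun z => 0 < p j z),
      p j z * Real.log (p j z / qfun W j z) = Real.log (∑ v, Real.exp (W v j)) := by
    intro j
    have : ∀ z ∈ Finset.univ.filter (fun z => 0 < p j z),
        p j z * Real.log (p j z / qfun W j z)
        = p j z * Real.log (∑ v, Real.exp (W v j)) := by
      intro z hz
      have hz' := (Finset.mem_filter.mp hz).2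
      have hlq := log_qfun hV W j z
      have hWz : W z j = Real.log (p j z) := by simp [hW, if_pos hz']
      rw [Real.log_div hz'.ne' (qfun_pos hV W j z).ne', hlq, hWz]
      ring
    rw [Finset.sum_congr rfl this, ← Finset.sum_mul, sum_p_S hp hpsum j, one_mul]
  have hlog : ∀ j, Real.log (∑ v, Real.exp (W v j)) ≤ V * Real.exp (-c) := by
    intro j
    have h1 : Real.log (∑ v, Real.exp (W v j)) ≤ Real.log (1 + V * Real.exp (-c)) :=
      Real.log_le_log (denom_pos hV W j) (hDle j)
    have h2 : Real.log (1 + V * Real.exp (-c)) ≤ (1 + V * Real.exp (-c)) - 1 := by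
      apply Real.log_le_sub_one_of_pos
      positivity
    linarith
  calc ∑ j, piv j * ∑ z ∈ Finset.univ.filter (fun z => 0 < p j z),
        p j z * Real.log (p j z / qfun W j z)
      = ∑ j, piv j * Real.log (∑ v, Real.exp (W v j)) :=
        Finset.sum_congr rfl fun j _ => by rw [hKL j]
    _ ≤ ∑ j, piv j * (V * Real.exp (-c)) :=
        Finset.sum_le_sum fun j _ => mul_le_mul_of_nonneg_left (hlog j) (hpiv j).le
    _ = V * Real.exp (-c) := by rw [← Finset.sum_mul, hpisum, one_mul]

end analytic

/-! ### Algebraic lemmas about `Fsub` -/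

section algebraic
variable {V m : ℕ} {p : Fin m → Fin V → ℝ}

lemma frobInner_std (X : Matrix (Fin V) (Fin m) ℝ) (z z' : Fin V) (j : Fin m) :
    frobInner X (Matrix.single z j 1 - Matrix.single z' j 1)
      = X z j - X z' j := by
  simp [frobInner, Matrix.single, Matrix.sub_apply, Matrix.of_apply, ite_and,
    mul_sub, mul_ite, Finset.sum_sub_distrib, Finset.sum_ite_eq, Finset.sum_ite_eq']

lemma frobInner_span_zero (x : Matrix (Fin V) (Fin m) ℝ)
    (h : ∀ j z z', 0 < p j z → 0 < p j z' → x z j = x z' j) :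
    ∀ y ∈ Fsub p, frobInner x y = 0 := by
  intro y hy
  induction hy using Submodule.span_induction with
  | mem g hg =>
    obtain ⟨j, z, z', h1, h2, rfl⟩ := hg
    rw [frobInner_std, h j z z' h1 h2, sub_self]
  | zero => simp [frobInner]
  | add y y' _ _ hy hy' =>
    have : frobInner x (y + y') = frobInner x y + frobInner x y' := by
      simp [frobInner, Matrix.add_apply, mul_add, Finset.sum_add_distrib]
    rw [this, hy, hy', add_zero]
  | smul a y _ hy =>
    have : frobInner x (a • y) = a * frobInner x y := by
      simp only [frobInner, Matrix.smul_apply, smul_eq_mul, Finset.mul_sum]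
      exact Finset.sum_congr rfl fun v _ => Finset.sum_congr rfl fun i _ => by ring
    rw [this, hy, mul_zero]

lemma eq_zero_of_Fsub_diff (x : Matrix (Fin V) (Fin m) ℝ) (hx : x ∈ Fsub p)
    (h : ∀ j z z', 0 < p j z → 0 < p j z' → x z j = x z' j) : x = 0 := by
  have h0 : frobInner x x = 0 := frobInner_span_zero x h x hx
  have h1 : ∀ v ∈ (Finset.univ : Finset (Fin V)), 0 ≤ ∑ i, x v i * x v i :=
    fun v _ => Finset.sum_nonneg fun i _ => mul_self_nonneg _
  ext v i
  have h2 : ∑ i, x v i * x v i = 0 :=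
    (Finset.sum_eq_zero_iff_of_nonneg h1).mp h0 v (Finset.mem_univ v)
  have h3 := (Finset.sum_eq_zero_iff_of_nonneg
    (fun i _ => mul_self_nonneg (x v i))).mp h2 i (Finset.mem_univ i)
  simpa [mul_self_eq_zero] using h3

lemma Lin_exists (hp : ∀ j z, 0 ≤ p j z) (hpsum : ∀ j, ∑ z, p j z = 1) :
    ∃ Lin : Matrix (Fin V) (Fin m) ℝ, Lin ∈ Fsub p ∧
      ∀ j z z', 0 < p j z → 0 < p j z' →
        Lin z j - Lin z' j = Real.log (p j z / p j z') := by
  classical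
  have hSne : ∀ j, ∃ z, 0 < p j z := by
    intro j
    by_contra h
    push_neg at h
    have h0 : ∀ z, p j z = 0 := fun z => le_antisymm (h z) (hp j z)
    have h1 := hpsum j
    rw [Finset.sum_eq_zero (fun z _ => h0 z)] at h1
    norm_num at h1
  set S : Fin m → Finset (Fin V) := fun j => Finset.univ.filter (fun z => 0 < p j z) with hS
  have hSmem : ∀ j z, z ∈ S j ↔ 0 < p j z := by
    intro j z; simp [hS]
  have hSne' : ∀ j, (S j).Nonempty :=
    fun j => ⟨(hSne j).choose, (hSmem _ _).mpr (hSne j).choose_spec⟩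
  set z0 : Fin m → Fin V := fun j => (hSne' j).choose with hz0
  have hz0mem : ∀ j, z0 j ∈ S j := fun j => (hSne' j).choose_spec
  set avg : Fin m → ℝ := fun j => (∑ z ∈ S j, Real.log (p j z)) / (S j).card with havg
  set a : Fin m → Fin V → ℝ := fun j z => Real.log (p j z) - avg j with ha
  have hasum : ∀ j, ∑ z ∈ S j, a j z = 0 := by
    intro j
    simp only [ha, Finset.sum_sub_distrib, Finset.sum_const, nsmul_eq_mul, havg]
    rw [mul_div_cancel₀]
    · ring
    · exact_mod_cast Finset.card_ne_zero_of_mem (hz0mem j)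
  refine ⟨∑ j, ∑ z ∈ S j, a j z • (Matrix.single z j 1
      - Matrix.single (z0 j) j 1), ?_, ?_⟩
  · apply Submodule.sum_mem
    intro j _
    apply Submodule.sum_mem
    intro z hz
    exact Submodule.smul_mem _ _ (Submodule.subset_span
      ⟨j, z, z0 j, (hSmem j z).mp hz, (hSmem j (z0 j)).mp (hz0mem j), rfl⟩)
  · have hentry : ∀ (v : Fin V) (i : Fin m),
        (∑ j, ∑ z ∈ S j, a j z • (Matrix.single z j (1:ℝ)
          - Matrix.single (z0 j) j (1:ℝ))) v i = if 0 < p i v then a i v else 0 := by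
      intro v i
      rw [Matrix.sum_apply]
      rw [Finset.sum_eq_single i]
      · rw [Matrix.sum_apply]
        have : ∀ z ∈ S i, (a i z • (Matrix.single z i (1:ℝ)
            - Matrix.single (z0 i) i (1:ℝ))) v i
            = (if z = v then a i z else 0) - (if z0 i = v then a i z else 0) := by
          intro z _
          simp [Matrix.smul_apply, Matrix.sub_apply, Matrix.single, mul_sub, mul_ite]
        rw [Finset.sum_congr rfl this, Finset.sum_sub_distrib]
        have e1 : ∑ z ∈ S i, (if z = v then a i z else 0) = if v ∈ S i then a i v else 0 :=
          Finset.sum_ite_eq' (S i) v (a i)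
        have e2 : ∑ z ∈ S i, (if z0 i = v then a i z else 0)
            = if z0 i = v then ∑ z ∈ S i, a i z else 0 := by
          split <;> simp_all
        rw [e1, e2, hasum i]
        simp only [ite_self, sub_zero]
        simp [hSmem i v]
      · intro j _ hji
        rw [Matrix.sum_apply]
        apply Finset.sum_eq_zero
        intro z _
        simp [Matrix.smul_apply, Matrix.sub_apply, Matrix.single, hji]
      · intro h
        exact absurd (Finset.mem_univ i) h
    intro j z z' h1 h2
    rw [hentry z j, hentry z' j, if_pos h1, if_pos h2, ha]
    simp only
    rw [Real.log_div h1.ne' h2.ne']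
    ring

end algebraic

/-- Identification of matrices with Euclidean space. -/
def matEquiv (V m : ℕ) : Matrix (Fin V) (Fin m) ℝ ≃ₗ[ℝ] EuclideanSpace ℝ (Fin V × Fin m) :=
  (LinearEquiv.curry ℝ ℝ (Fin V) (Fin m)).symm.trans (WithLp.linearEquiv 2 ℝ _).symm

lemma frobInner_eq_inner (V m : ℕ) (X Y : Matrix (Fin V) (Fin m) ℝ) :
    frobInner X Y = inner ℝ (matEquiv V m X) (matEquiv V m Y) := by
  simp only [PiLp.inner_apply, RCLike.inner_apply, starRingEnd_apply, star_trivial,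
    Fintype.sum_prod_type, frobInner]
  exact Finset.sum_congr rfl fun i _ => Finset.sum_congr rfl fun j _ => mul_comm _ _

/-- The linear map recording in-support logit differences. -/
def Phi {V m : ℕ} (p : Fin m → Fin V → ℝ) :
    Matrix (Fin V) (Fin m) ℝ →ₗ[ℝ] (Fin m × Fin V × Fin V → ℝ) where
  toFun X := fun g => if 0 < p g.1 g.2.1 ∧ 0 < p g.1 g.2.2
    then X g.2.1 g.1 - X g.2.2 g.1 else 0
  map_add' X Y := by
    funext g
    by_cases h : 0 < p g.1 g.2.1 ∧ 0 < p g.1 g.2.2 <;>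
      simp [h, Matrix.add_apply] <;> ring
  map_smul' c X := by
    funext g
    by_cases h : 0 < p g.1 g.2.1 ∧ 0 < p g.1 g.2.2 <;>
      simp [h, Matrix.smul_apply, smul_eq_mul, mul_sub]

lemma Phi_congr {V m : ℕ} (p : Fin m → Fin V → ℝ) (X Y : Matrix (Fin V) (Fin m) ℝ)
    (h : ∀ j z z', 0 < p j z → 0 < p j z' → X z j - X z' j = Y z j - Y z' j) :
    Phi p X = Phi p Y := by
  funext g
  simp only [Phi, LinearMap.coe_mk, AddHom.coe_mk]
  by_cases hg : 0 < p g.1 g.2.1 ∧ 0 < p g.1 g.2.2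
  · rw [if_pos hg, if_pos hg, h g.1 g.2.1 g.2.2 hg.1 hg.2]
  · rw [if_neg hg, if_neg hg]

theorem stmt_4 (V m d : ℕ) (hV : 2 ≤ V) (hm : 0 < m) (hd : 0 < d)
    (piv : Fin m → ℝ) (hpiv : ∀ j, 0 < piv j) (hpisum : ∑ j, piv j = 1)
    (p : Fin m → Fin V → ℝ) (hp : ∀ j z, 0 ≤ p j z) (hpsum : ∀ j, ∑ z, p j z = 1)
    (hdV : V ≤ d)
    (L : ℝ → Matrix (Fin V) (Fin m) ℝ)
    (hmin : ∀ lam : ℝ, 0 < lam → (L lam).rank ≤ d ∧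
        ∀ L' : Matrix (Fin V) (Fin m) ℝ, L'.rank ≤ d →
          CEloss piv p (L lam) + lam * nuclearNorm (L lam) ≤
          CEloss piv p L' + lam * nuclearNorm L') :
    Tendsto (fun lam => CEloss piv p (L lam)) (𝓝[>] (0 : ℝ)) (𝓝 (entropyH piv p)) ∧
    ∃ Lin : Matrix (Fin V) (Fin m) ℝ,
      Lin ∈ Fsub p ∧
      (∀ j z z', 0 < p j z → 0 < p j z' →
          Lin z j - Lin z' j = Real.log (p j z / p j z')) ∧
      (∀ M ∈ Fsub p, (∀ j z z', 0 < p j z → 0 < p j z' →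
          M z j - M z' j = Real.log (p j z / p j z')) → M = Lin) ∧
      ∃ P : ℝ → Matrix (Fin V) (Fin m) ℝ,
        (∀ lam : ℝ, 0 < lam →
            P lam ∈ Fsub p ∧ ∀ Y ∈ Fsub p, frobInner (L lam - P lam) Y = 0) ∧
        Tendsto P (𝓝[>] (0 : ℝ)) (𝓝 Lin) := by
  have hV0 : 0 < V := by omega
  have hrank : ∀ X : Matrix (Fin V) (Fin m) ℝ, X.rank ≤ d := fun X =>
    le_trans (by simpa using Matrix.rank_le_card_height X) hdV
  -- upper bound on the excess loss
  have hDle : ∀ ε : ℝ, 0 < ε → ∃ δ > 0, ∀ lam : ℝ, 0 < lam → lam < δ →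
      CEloss piv p (L lam) - entropyH piv p < ε := by
    intro ε hε
    set c : ℝ := -Real.log (ε / (2 * (V + 1))) with hc
    have hexp : Real.exp (-c) = ε / (2 * (V + 1)) := by
      rw [hc, neg_neg, Real.exp_log (by positivity)]
    have hVc : (V : ℝ) * Real.exp (-c) < ε / 2 := by
      rw [hexp, mul_div_assoc']
      rw [div_lt_div_iff₀ (by positivity) (by norm_num)]
      nlinarith [hε, Nat.cast_nonneg (α := ℝ) V]
    set W : Matrix (Fin V) (Fin m) ℝ :=
      Matrix.of fun z j => if 0 < p j z then Real.log (p j z) else -c with hW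
    refine ⟨(ε / 2) / (nuclearNorm W + 1),
      div_pos (by positivity) (by linarith [nuclearNorm_nonneg W]), ?_⟩
    intro lam hlam hlamlt
    have hmin' := (hmin lam hlam).2 W (hrank W)
    have hWbound : CEloss piv p W - entropyH piv p ≤ V * Real.exp (-c) :=
      CE_witness hV0 hp hpsum hpiv hpisum c
    have hNW : 0 ≤ nuclearNorm W := nuclearNorm_nonneg W
    have hNL : 0 ≤ nuclearNorm (L lam) := nuclearNorm_nonneg (L lam)
    have hlamNW : lam * nuclearNorm W < ε / 2 := by
      calc lam * nuclearNorm W ≤ lam * (nuclearNorm W + 1) := by nlinarith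
        _ < ((ε / 2) / (nuclearNorm W + 1)) * (nuclearNorm W + 1) := by
            apply mul_lt_mul_of_pos_right hlamlt; positivity
        _ = ε / 2 := by field_simp
    nlinarith [mul_nonneg hlam.le hNL, hVc]
  -- the excess loss tends to zero
  have hD0 : Tendsto (fun lam => CEloss piv p (L lam) - entropyH piv p)
      (𝓝[>] (0 : ℝ)) (𝓝 0) := by
    rw [Metric.tendsto_nhdsWithin_nhds]
    intro ε hε
    obtain ⟨δ, hδ, hδ'⟩ := hDle ε hε
    refine ⟨δ, hδ, ?_⟩
    intro lam hlam hdist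
    rw [Real.dist_eq, sub_zero] at hdist ⊢
    have hlam0 : 0 < lam := hlam
    have h1 : CEloss piv p (L lam) - entropyH piv p < ε :=
      hδ' lam hlam0 (by rwa [abs_of_pos hlam0] at hdist)
    have h2 : 0 ≤ CEloss piv p (L lam) - entropyH piv p :=
      sub_nonneg.mpr (H_le_CE hV0 hp hpsum hpiv (L lam))
    rw [abs_of_nonneg h2]
    exact h1
  have part1 : Tendsto (fun lam => CEloss piv p (L lam)) (𝓝[>] (0 : ℝ))
      (𝓝 (entropyH piv p)) := by
    have := hD0.add (tendsto_const_nhds (x := entropyH piv p)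
      (f := 𝓝[>] (0:ℝ)))
    simpa using this
  -- softmax probabilities converge to p on the support
  have hq : ∀ j z, 0 < p j z →
      Tendsto (fun lam => qfun (L lam) j z) (𝓝[>] (0 : ℝ)) (𝓝 (p j z)) := by
    intro j z hz
    have hφ0 : Tendsto (fun lam => p j z * Real.log (p j z / qfun (L lam) j z)
        + qfun (L lam) j z - p j z) (𝓝[>] (0:ℝ)) (𝓝 0) := by
      apply tendsto_of_tendsto_of_tendsto_of_le_of_le (g := fun _ => (0:ℝ))
        (h := fun lam => (CEloss piv p (L lam) - entropyH piv p) / piv j)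
      · exact tendsto_const_nhds
      · simpa using hD0.div_const (piv j)
      · intro lam
        exact phi_nonneg hz (qfun_pos hV0 (L lam) j z)
      · intro lam
        rw [le_div_iff₀ (hpiv j)]
        calc (p j z * Real.log (p j z / qfun (L lam) j z) + qfun (L lam) j z - p j z) * piv j
            = piv j * (p j z * Real.log (p j z / qfun (L lam) j z)
              + qfun (L lam) j z - p j z) := by ring
          _ ≤ CEloss piv p (L lam) - entropyH piv p :=
            phi_le_D hV0 hp hpsum hpiv (L lam) j z hz
    -- the ratio tends to 1
    have hu : Tendsto (fun lam => qfun (L lam) j z / p j z) (𝓝[>] (0:ℝ)) (𝓝 1) := by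
      rw [Metric.tendsto_nhdsWithin_nhds]
      intro ε hε
      obtain ⟨δ', hδ', hδ'spec⟩ := hfun_small hε
      have hφ0' := Metric.tendsto_nhdsWithin_nhds.mp hφ0 (δ' * p j z) (by positivity)
      obtain ⟨δ, hδ, hδspec⟩ := hφ0'
      refine ⟨δ, hδ, ?_⟩
      intro lam hlam hdist
      have hφsmall := hδspec hlam hdist
      rw [Real.dist_eq, sub_zero] at hφsmall
      have hqp : 0 < qfun (L lam) j z := qfun_pos hV0 (L lam) j z
      have hnn : 0 ≤ p j z * Real.log (p j z / qfun (L lam) j z)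
          + qfun (L lam) j z - p j z := phi_nonneg hz hqp
      rw [abs_of_nonneg hnn] at hφsmall
      have heq := phi_eq_hfun hz hqp
      have hhle : (qfun (L lam) j z / p j z) - 1
          - Real.log (qfun (L lam) j z / p j z) < δ' := by
        have hzp : 0 < p j z := hz
        nlinarith [heq, hφsmall]
      have := hδ'spec (qfun (L lam) j z / p j z) (div_pos hqp hz) hhle
      rwa [Real.dist_eq]
    have : Tendsto (fun lam => (qfun (L lam) j z / p j z) * p j z)
        (𝓝[>] (0:ℝ)) (𝓝 (1 * p j z)) := hu.mul_const (p j z)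
    simpa [div_mul_cancel₀, hz.ne', one_mul] using this
  -- logit differences converge to the log-odds
  have hdiff : ∀ j z z', 0 < p j z → 0 < p j z' →
      Tendsto (fun lam => L lam z j - L lam z' j) (𝓝[>] (0:ℝ))
        (𝓝 (Real.log (p j z / p j z'))) := by
    intro j z z' h1 h2
    have hlq : ∀ lam, L lam z j - L lam z' j
        = Real.log (qfun (L lam) j z) - Real.log (qfun (L lam) j z') := by
      intro lam
      rw [log_qfun hV0, log_qfun hV0]
      ring
    have ht1 : Tendsto (fun lam => Real.log (qfun (L lam) j z))
        (𝓝[>] (0:ℝ)) (𝓝 (Real.log (p j z))) :=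
      ((Real.continuousAt_log h1.ne').tendsto).comp (hq j z h1)
    have ht2 : Tendsto (fun lam => Real.log (qfun (L lam) j z'))
        (𝓝[>] (0:ℝ)) (𝓝 (Real.log (p j z'))) :=
      ((Real.continuousAt_log h2.ne').tendsto).comp (hq j z' h2)
    have := ht1.sub ht2
    rw [← Real.log_div h1.ne' h2.ne'] at this
    exact this.congr (fun lam => (hlq lam).symm)
  -- Lin
  obtain ⟨Lin, hLinmem, hLindiff⟩ := Lin_exists hp hpsum
  refine ⟨part1, Lin, hLinmem, hLindiff, ?_, ?_⟩
  · -- uniqueness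
    intro M hM hMdiff
    have h0 : M - Lin = 0 := by
      apply eq_zero_of_Fsub_diff (M - Lin) (Submodule.sub_mem _ hM hLinmem)
      intro j z z' h1 h2
      have e1 := hMdiff j z z' h1 h2
      have e2 := hLindiff j z z' h1 h2
      simp only [Matrix.sub_apply]
      linarith
    have := sub_eq_zero.mp h0
    exact this
  · -- the projection path
    set e := matEquiv V m with he
    set K : Submodule ℝ (EuclideanSpace ℝ (Fin V × Fin m)) :=
      (Fsub p).map (e : Matrix (Fin V) (Fin m) ℝ →ₗ[ℝ] EuclideanSpace ℝ (Fin V × Fin m))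
      with hK
    set P : ℝ → Matrix (Fin V) (Fin m) ℝ :=
      fun lam => e.symm ((K.orthogonalProjectionOnto (e (L lam))) :
        EuclideanSpace ℝ (Fin V × Fin m)) with hP
    have hPmem : ∀ lam, P lam ∈ Fsub p := by
      intro lam
      have hmem : ((K.orthogonalProjectionOnto (e (L lam))) :
          EuclideanSpace ℝ (Fin V × Fin m)) ∈ K := Submodule.coe_mem _
      obtain ⟨x, hx, hxe⟩ := Submodule.mem_map.mp hmem
      rw [hP]
      simp only [← hxe, LinearEquiv.coe_coe, LinearEquiv.symm_apply_apply]
      exact hx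
    have hPorth : ∀ lam, ∀ Y ∈ Fsub p, frobInner (L lam - P lam) Y = 0 := by
      intro lam Y hY
      rw [frobInner_eq_inner]
      have he1 : e (L lam - P lam) = e (L lam)
          - ((K.orthogonalProjectionOnto (e (L lam))) : EuclideanSpace ℝ (Fin V × Fin m)) := by
        rw [map_sub, hP]
        simp only [LinearEquiv.apply_symm_apply]
      rw [he1]
      have := K.starProjection_inner_eq_zero (e (L lam)) (e Y)
        (Submodule.mem_map_of_mem hY)
      rwa [Submodule.starProjection_apply] at this
    -- Phi of L equals Phi of P
    have hΦeq : ∀ lam, Phi p (L lam) = Phi p (P lam) := by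
      intro lam
      apply Phi_congr
      intro j z z' h1 h2
      have hgen : (Matrix.single z j (1:ℝ) - Matrix.single z' j 1) ∈ Fsub p :=
        Submodule.subset_span ⟨j, z, z', h1, h2, rfl⟩
      have := hPorth lam _ hgen
      rw [frobInner_std] at this
      simp only [Matrix.sub_apply] at this
      linarith
    set Φ' : ↥(Fsub p) →ₗ[ℝ] (Fin m × Fin V × Fin V → ℝ) :=
      (Phi p).comp (Fsub p).subtype with hΦ'
    have hinj : Function.Injective Φ' := by
      rw [← LinearMap.ker_eq_bot]
      rw [LinearMap.ker_eq_bot']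
      intro x hx
      have hx' : Phi p (x : Matrix (Fin V) (Fin m) ℝ) = 0 := hx
      have hzero : (x : Matrix (Fin V) (Fin m) ℝ) = 0 := by
        apply eq_zero_of_Fsub_diff _ x.2
        intro j z z' h1 h2
        have := congrFun hx' (j, z, z')
        simp only [Phi, LinearMap.coe_mk, AddHom.coe_mk, Pi.zero_apply] at this
        rw [if_pos ⟨h1, h2⟩] at this
        linarith
      exact Subtype.ext hzero
    set eqv := LinearEquiv.ofInjective Φ' hinj with heqv
    have hcont : Continuous (eqv.symm.toLinearMap) := LinearMap.continuous_of_finiteDimensional _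
    have hΦLin_mem : Phi p Lin ∈ LinearMap.range Φ' := ⟨⟨Lin, hLinmem⟩, rfl⟩
    have hmemlam : ∀ lam, Phi p (L lam) ∈ LinearMap.range Φ' :=
      fun lam => ⟨⟨P lam, hPmem lam⟩, (hΦeq lam).symm⟩
    -- coordinatewise convergence of Phi (L lam)
    have hΦL : Tendsto (fun lam => Phi p (L lam)) (𝓝[>] (0:ℝ)) (𝓝 (Phi p Lin)) := by
      rw [tendsto_pi_nhds]
      intro g
      by_cases hg : 0 < p g.1 g.2.1 ∧ 0 < p g.1 g.2.2
      · have h1 : ∀ lam, Phi p (L lam) g = L lam g.2.1 g.1 - L lam g.2.2 g.1 := by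
          intro lam
          simp only [Phi, LinearMap.coe_mk, AddHom.coe_mk]
          rw [if_pos hg]
        have h2 : Phi p Lin g = Real.log (p g.1 g.2.1 / p g.1 g.2.2) := by
          simp only [Phi, LinearMap.coe_mk, AddHom.coe_mk]
          rw [if_pos hg]
          exact hLindiff g.1 g.2.1 g.2.2 hg.1 hg.2
        rw [h2]
        exact (hdiff g.1 g.2.1 g.2.2 hg.1 hg.2).congr (fun lam => (h1 lam).symm)
      · have h1 : ∀ lam, Phi p (L lam) g = 0 := by
          intro lam
          simp only [Phi, LinearMap.coe_mk, AddHom.coe_mk]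
          rw [if_neg hg]
        have h2 : Phi p Lin g = 0 := by
          simp only [Phi, LinearMap.coe_mk, AddHom.coe_mk]
          rw [if_neg hg]
        rw [h2]
        exact tendsto_const_nhds.congr (fun lam => (h1 lam).symm)
    -- subtype-valued convergence
    have hsub : Tendsto (fun lam => (⟨Phi p (L lam), hmemlam lam⟩ : ↥(LinearMap.range Φ')))
        (𝓝[>] (0:ℝ)) (𝓝 ⟨Phi p Lin, hΦLin_mem⟩) := by
      rw [tendsto_subtype_rng]
      exact hΦL
    have hcomp : Tendsto (fun lam =>
        ((eqv.symm ⟨Phi p (L lam), hmemlam lam⟩ : ↥(Fsub p)) : Matrix (Fin V) (Fin m) ℝ))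
        (𝓝[>] (0:ℝ))
        (𝓝 ((eqv.symm ⟨Phi p Lin, hΦLin_mem⟩ : ↥(Fsub p)) : Matrix (Fin V) (Fin m) ℝ)) := by
      exact ((continuous_subtype_val.comp hcont).tendsto _).comp hsub
    have hLinval : ((eqv.symm ⟨Phi p Lin, hΦLin_mem⟩ : ↥(Fsub p)) :
        Matrix (Fin V) (Fin m) ℝ) = Lin := by
      have h1 : (⟨Phi p Lin, hΦLin_mem⟩ : ↥(LinearMap.range Φ'))
          = eqv ⟨Lin, hLinmem⟩ := Subtype.ext rfl
      rw [h1, LinearEquiv.symm_apply_apply]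
    have hPval : ∀ lam, ((eqv.symm ⟨Phi p (L lam), hmemlam lam⟩ : ↥(Fsub p)) :
        Matrix (Fin V) (Fin m) ℝ) = P lam := by
      intro lam
      have h1 : (⟨Phi p (L lam), hmemlam lam⟩ : ↥(LinearMap.range Φ'))
          = eqv ⟨P lam, hPmem lam⟩ := Subtype.ext (hΦeq lam)
      rw [h1, LinearEquiv.symm_apply_apply]
    refine ⟨P, fun lam _ => ⟨hPmem lam, hPorth lam⟩, ?_⟩
    rw [← hLinval]
    exact hcomp.congr (fun lam => hPval lam)
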